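/- The dual of the problem min over ‖y‖_2 ≤ 1 of Q_1^{(g)}(y) − ⟨y, g̃⟩ is min over α ∈ [0,1]^m with α_{uv}+α_{vu}=1 of ‖f_A(α) − g̃‖_2^2 (up to squaring the objective), and an optimal primal solution is given by y = −(f_A(α*) − g̃)/‖f_A(α*) − g̃‖_2 when f_A(α*) ≠ g̃; in particular min_{‖y‖_2≤1} (Q_1^{(g)}(y) − ⟨y, g̃⟩) = − min_α ‖f_A(α) − g̃‖_2. -/

import Mathlib

open scoped Classical

/-- The Euclidean (`ℓ₂`) norm of a finitely supported real vector. -/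
noncomputable def enorm2 {γ : Type*} [Fintype γ] (v : γ → ℝ) : ℝ :=
  Real.sqrt (∑ u, v u ^ 2)

namespace Stmt17Aux

variable {γ : Type*} [Fintype γ]

lemma sumsq_nonneg (v : γ → ℝ) : 0 ≤ ∑ u, v u ^ 2 :=
  Finset.sum_nonneg fun _ _ => sq_nonneg _

lemma enorm2_nonneg (v : γ → ℝ) : 0 ≤ enorm2 v := Real.sqrt_nonneg _

lemma sq_enorm2 (v : γ → ℝ) : enorm2 v ^ 2 = ∑ u, v u ^ 2 :=
  Real.sq_sqrt (sumsq_nonneg v)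

/-- Cauchy–Schwarz lower bound. -/
lemma cs_lower (y w : γ → ℝ) : -(enorm2 y * enorm2 w) ≤ ∑ u, y u * w u := by
  have h := Finset.sum_mul_sq_le_sq_mul_sq Finset.univ y w
  have h2 : |∑ u, y u * w u| ≤ enorm2 y * enorm2 w := by
    rw [← Real.sqrt_sq_eq_abs, enorm2, enorm2, ← Real.sqrt_mul (sumsq_nonneg y)]
    exact Real.sqrt_le_sqrt h
  linarith [neg_abs_le (∑ u, y u * w u)]

/-- Rewriting the pairing `⟨y, f_A(a)⟩` as a double sum. -/
lemma pairing (A : γ → γ → ℝ) (y : γ → ℝ) (a : γ → γ → ℝ) :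
    ∑ u, y u * (∑ v, (A u v * a u v - A v u * a v u))
      = ∑ u, ∑ v, A u v * a u v * (y u - y v) := by
  calc ∑ u, y u * (∑ v, (A u v * a u v - A v u * a v u))
      = ∑ u, ((∑ v, A u v * a u v * y u) - ∑ v, A v u * a v u * y u) := by
        refine Finset.sum_congr rfl fun u _ => ?_
        rw [Finset.mul_sum, ← Finset.sum_sub_distrib]
        exact Finset.sum_congr rfl fun v _ => by ring
    _ = (∑ u, ∑ v, A u v * a u v * y u) - ∑ u, ∑ v, A v u * a v u * y u := by
        rw [← Finset.sum_sub_distrib]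
    _ = (∑ u, ∑ v, A u v * a u v * y u) - ∑ u, ∑ v, A u v * a u v * y v := by
        congr 1
        exact Finset.sum_comm
    _ = ∑ u, ∑ v, A u v * a u v * (y u - y v) := by
        rw [← Finset.sum_sub_distrib]
        refine Finset.sum_congr rfl fun u _ => ?_
        rw [← Finset.sum_sub_distrib]
        exact Finset.sum_congr rfl fun v _ => by ring

/-- The pairing is at most `Q₁(y)`. -/
lemma pairing_le (A : γ → γ → ℝ) (hA : ∀ u v, 0 ≤ A u v) (y : γ → ℝ) {a : γ → γ → ℝ}
    (ha : ∀ u v, a u v ∈ Set.Icc (0 : ℝ) 1 ∧ a u v + a v u = 1) :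
    ∑ u, y u * (∑ v, (A u v * a u v - A v u * a v u))
      ≤ ∑ u, ∑ v, A u v * max (y u - y v) 0 := by
  rw [pairing]
  refine Finset.sum_le_sum fun u _ => Finset.sum_le_sum fun v _ => ?_
  obtain ⟨⟨h0, h1⟩, -⟩ := ha u v
  have hAuv := hA u v
  have hmax : a u v * (y u - y v) ≤ max (y u - y v) 0 := by
    rcases le_total (y u - y v) 0 with h | h
    · exact le_trans (by nlinarith) (le_max_right _ _)
    · exact le_trans (by nlinarith) (le_max_left _ _)
  calc A u v * a u v * (y u - y v) = A u v * (a u v * (y u - y v)) := by ring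
    _ ≤ A u v * max (y u - y v) 0 := mul_le_mul_of_nonneg_left hmax hAuv

/-- For each `y` there is an admissible `a` attaining `Q₁(y)`. -/
lemma pairing_exists (A : γ → γ → ℝ) (y : γ → ℝ) :
    ∃ a : γ → γ → ℝ, (∀ u v, a u v ∈ Set.Icc (0 : ℝ) 1 ∧ a u v + a v u = 1) ∧
      ∑ u, y u * (∑ v, (A u v * a u v - A v u * a v u))
        = ∑ u, ∑ v, A u v * max (y u - y v) 0 := by
  refine ⟨fun u v => if y v < y u then 1 else if y u < y v then 0 else 1/2, ?_, ?_⟩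
  · intro u v
    rcases lt_trichotomy (y u) (y v) with h | h | h
    · simp [h, lt_asymm h, le_of_lt h]
    · simp [h, lt_irrefl]
      norm_num
    · simp [h, lt_asymm h, le_of_lt h]
  · rw [pairing]
    refine Finset.sum_congr rfl fun u _ => Finset.sum_congr rfl fun v _ => ?_
    rcases lt_trichotomy (y u) (y v) with h | h | h
    · simp [h, lt_asymm h, max_eq_right (by linarith : y u - y v ≤ 0)]
    · simp [h, lt_irrefl, max_eq_right (by linarith : y u - y v ≤ 0)]
    · simp [h, max_eq_left (by linarith : (0:ℝ) ≤ y u - y v)]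

/-- Affinity of `f_A`. -/
lemma fA_comb (A : γ → γ → ℝ) (a b : γ → γ → ℝ) (t : ℝ) (u : γ) :
    ∑ v, (A u v * ((1-t) * a u v + t * b u v) - A v u * ((1-t) * a v u + t * b v u))
      = (1-t) * (∑ v, (A u v * a u v - A v u * a v u))
        + t * (∑ v, (A u v * b u v - A v u * b v u)) := by
  rw [Finset.mul_sum, Finset.mul_sum, ← Finset.sum_add_distrib]
  exact Finset.sum_congr rfl fun v _ => by ring

lemma pos_of_quad {s q : ℝ} (hq : 0 ≤ q)
    (h : ∀ t : ℝ, 0 < t → t ≤ 1 → 0 ≤ 2 * t * s + t ^ 2 * q) : 0 ≤ s := by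
  by_contra hs
  push_neg at hs
  rcases eq_or_lt_of_le hq with hq0 | hq0
  · have := h 1 one_pos le_rfl
    nlinarith
  · have hds : 0 < -s / q := div_pos (neg_pos.mpr hs) hq0
    set t := min 1 (-s / q) with ht
    have htpos : 0 < t := lt_min one_pos hds
    have ht1 : t ≤ 1 := min_le_left _ _
    have ht2 : t * q ≤ -s := (le_div_iff₀ hq0).mp (min_le_right _ _)
    have h3 := h t htpos ht1
    nlinarith [mul_le_mul_of_nonneg_left ht2 htpos.le, mul_pos htpos (neg_pos.mpr hs)]

/-- Variational inequality at a minimizer of `‖f_A(a) − g̃‖₂`. -/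
lemma varineq (A : γ → γ → ℝ) (gt : γ → ℝ) {a : γ → γ → ℝ}
    (ha : ∀ u v, a u v ∈ Set.Icc (0 : ℝ) 1 ∧ a u v + a v u = 1)
    (hmin : ∀ b : γ → γ → ℝ, (∀ u v, b u v ∈ Set.Icc (0 : ℝ) 1 ∧ b u v + b v u = 1) →
      enorm2 (fun u => (∑ v, (A u v * a u v - A v u * a v u)) - gt u)
        ≤ enorm2 (fun u => (∑ v, (A u v * b u v - A v u * b v u)) - gt u))
    {b : γ → γ → ℝ} (hb : ∀ u v, b u v ∈ Set.Icc (0 : ℝ) 1 ∧ b u v + b v u = 1) :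
    ∑ u, ((∑ v, (A u v * a u v - A v u * a v u)) - gt u) ^ 2
      ≤ ∑ u, ((∑ v, (A u v * a u v - A v u * a v u)) - gt u)
          * ((∑ v, (A u v * b u v - A v u * b v u)) - gt u) := by
  set wa : γ → ℝ := fun u => (∑ v, (A u v * a u v - A v u * a v u)) - gt u with hwa
  set d : γ → ℝ := fun u => ((∑ v, (A u v * b u v - A v u * b v u)) - gt u) - wa u with hd
  have hkey : 0 ≤ ∑ u, wa u * d u := by
    refine pos_of_quad (sumsq_nonneg d) fun t ht0 ht1 => ?_
    set c : γ → γ → ℝ := fun u v => (1-t) * a u v + t * b u v with hc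
    have hcD : ∀ u v, c u v ∈ Set.Icc (0 : ℝ) 1 ∧ c u v + c v u = 1 := by
      intro u v
      obtain ⟨⟨ha0, ha1⟩, ha2⟩ := ha u v
      obtain ⟨⟨hb0, hb1⟩, hb2⟩ := hb u v
      simp only [hc]
      refine ⟨⟨by nlinarith, by nlinarith⟩, by nlinarith⟩
    have hm := hmin c hcD
    have hsum : ∑ u, wa u ^ 2
        ≤ ∑ u, ((∑ v, (A u v * c u v - A v u * c v u)) - gt u) ^ 2 := by
      have := (Real.sqrt_le_sqrt_iff (sumsq_nonneg
        (fun u => (∑ v, (A u v * c u v - A v u * c v u)) - gt u))).mp hm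
      exact this
    have hfc : ∀ u, (∑ v, (A u v * c u v - A v u * c v u)) - gt u = wa u + t * d u := by
      intro u
      rw [hc]
      rw [fA_comb A a b t u]
      simp only [hwa, hd]
      ring
    have hexp : ∑ u, ((∑ v, (A u v * c u v - A v u * c v u)) - gt u) ^ 2
        = ∑ u, wa u ^ 2 + 2 * t * (∑ u, wa u * d u) + t ^ 2 * (∑ u, d u ^ 2) := by
      rw [Finset.mul_sum, Finset.mul_sum, ← Finset.sum_add_distrib, ← Finset.sum_add_distrib]
      refine Finset.sum_congr rfl fun u _ => ?_
      rw [hfc u]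
      ring
    rw [hexp] at hsum
    linarith
  have hsplit : ∑ u, wa u * ((∑ v, (A u v * b u v - A v u * b v u)) - gt u)
      = ∑ u, wa u ^ 2 + ∑ u, wa u * d u := by
    rw [← Finset.sum_add_distrib]
    refine Finset.sum_congr rfl fun u _ => ?_
    simp only [hd]
    ring
  calc ∑ u, wa u ^ 2 ≤ ∑ u, wa u ^ 2 + ∑ u, wa u * d u := by linarith
    _ = _ := hsplit.symm

/-- Existence of a dual minimizer by compactness. -/
lemma exists_min (A : γ → γ → ℝ) (gt : γ → ℝ) :
    ∃ a : γ → γ → ℝ, (∀ u v, a u v ∈ Set.Icc (0 : ℝ) 1 ∧ a u v + a v u = 1) ∧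
      ∀ b : γ → γ → ℝ, (∀ u v, b u v ∈ Set.Icc (0 : ℝ) 1 ∧ b u v + b v u = 1) →
        enorm2 (fun u => (∑ v, (A u v * a u v - A v u * a v u)) - gt u)
          ≤ enorm2 (fun u => (∑ v, (A u v * b u v - A v u * b v u)) - gt u) := by
  set S : Set (γ → γ → ℝ) :=
    {a | ∀ u v, a u v ∈ Set.Icc (0 : ℝ) 1 ∧ a u v + a v u = 1} with hS
  have hSne : S.Nonempty := by
    refine ⟨fun _ _ => 1/2, fun u v => ?_⟩
    norm_num
  have hclosed : IsClosed S := by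
    have : S = ⋂ u, ⋂ v, ({a : γ → γ → ℝ | a u v ∈ Set.Icc (0:ℝ) 1}
        ∩ {a : γ → γ → ℝ | a u v + a v u = 1}) := by
      ext a
      simp only [hS, Set.mem_iInter, Set.mem_inter_iff, Set.mem_setOf_eq, forall_and]
    rw [this]
    refine isClosed_iInter fun u => isClosed_iInter fun v => IsClosed.inter ?_ ?_
    · exact IsClosed.preimage ((continuous_apply v).comp (continuous_apply u)) isClosed_Icc
    · exact isClosed_eq (by fun_prop) continuous_const
  have hcomp : IsCompact S := by
    have hK : IsCompact (Set.pi Set.univ fun _ : γ => Set.pi Set.univ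
        fun _ : γ => Set.Icc (0:ℝ) 1) :=
      isCompact_univ_pi fun _ => isCompact_univ_pi fun _ => isCompact_Icc
    refine hK.of_isClosed_subset hclosed fun a ha => ?_
    intro u _ 
    intro v _
    exact (ha u v).1
  have hcont : Continuous fun a : γ → γ → ℝ =>
      enorm2 (fun u => (∑ v, (A u v * a u v - A v u * a v u)) - gt u) := by
    refine Real.continuous_sqrt.comp ?_
    refine continuous_finset_sum _ fun u _ => ?_
    refine Continuous.pow ?_ 2
    refine Continuous.sub ?_ continuous_const
    refine continuous_finset_sum _ fun v _ => ?_
    have h1 : Continuous fun a : γ → γ → ℝ => a u v :=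
      (continuous_apply v).comp (continuous_apply u)
    have h2 : Continuous fun a : γ → γ → ℝ => a v u :=
      (continuous_apply u).comp (continuous_apply v)
    exact (continuous_const.mul h1).sub (continuous_const.mul h2)
  obtain ⟨a, haS, hmin⟩ := hcomp.exists_isMinOn hSne hcont.continuousOn
  exact ⟨a, haS, fun b hb => hmin hb⟩

lemma enorm2_pos {w : γ → ℝ} (hne : w ≠ 0) : 0 < enorm2 w := by
  rw [enorm2, Real.sqrt_pos]
  obtain ⟨u, hu⟩ := Function.ne_iff.mp hne
  have h : 0 < w u ^ 2 := by nlinarith [mul_pos (abs_pos.mpr hu) (abs_pos.mpr hu), sq_abs (w u)]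
  exact lt_of_lt_of_le h
    (Finset.single_le_sum (fun i _ => sq_nonneg (w i)) (Finset.mem_univ u))

lemma enorm2_unit {w : γ → ℝ} (hne : w ≠ 0) :
    enorm2 (fun u => -(w u) / enorm2 w) = 1 := by
  have hN := enorm2_pos hne
  have hN2 : enorm2 w ^ 2 = ∑ u, w u ^ 2 := sq_enorm2 w
  rw [enorm2]
  have h : ∑ u, (-(w u) / enorm2 w) ^ 2 = (∑ u, w u ^ 2) / enorm2 w ^ 2 := by
    rw [Finset.sum_div]
    exact Finset.sum_congr rfl fun u _ => by rw [div_pow, neg_sq]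
  rw [h, ← hN2, div_self (pow_ne_zero 2 hN.ne')]
  exact Real.sqrt_one

/-- Lower bound for the primal objective on the unit ball. -/
lemma lower_bound (A : γ → γ → ℝ) (hA : ∀ u v, 0 ≤ A u v) (gt : γ → ℝ) {y : γ → ℝ}
    (hy : enorm2 y ≤ 1) {a : γ → γ → ℝ}
    (ha : ∀ u v, a u v ∈ Set.Icc (0 : ℝ) 1 ∧ a u v + a v u = 1) :
    -(enorm2 (fun u => (∑ v, (A u v * a u v - A v u * a v u)) - gt u))
      ≤ (∑ u, ∑ v, A u v * max (y u - y v) 0) - ∑ u, y u * gt u := by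
  set w : γ → ℝ := fun u => (∑ v, (A u v * a u v - A v u * a v u)) - gt u with hw
  have h1 := pairing_le A hA y ha
  have hsplit : ∑ u, y u * w u
      = ∑ u, y u * (∑ v, (A u v * a u v - A v u * a v u)) - ∑ u, y u * gt u := by
    rw [← Finset.sum_sub_distrib]
    exact Finset.sum_congr rfl fun u _ => by simp only [hw]; ring
  have h2 := cs_lower y w
  have h3 : enorm2 y * enorm2 w ≤ enorm2 w := mul_le_of_le_one_left (enorm2_nonneg w) hy
  linarith

/-- The candidate primal point attains value at most `−‖f_A(a) − g̃‖₂`. -/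
lemma obj_opt (A : γ → γ → ℝ) (hA : ∀ u v, 0 ≤ A u v) (gt : γ → ℝ) {a : γ → γ → ℝ}
    (ha : ∀ u v, a u v ∈ Set.Icc (0 : ℝ) 1 ∧ a u v + a v u = 1)
    (hmin : ∀ b : γ → γ → ℝ, (∀ u v, b u v ∈ Set.Icc (0 : ℝ) 1 ∧ b u v + b v u = 1) →
      enorm2 (fun u => (∑ v, (A u v * a u v - A v u * a v u)) - gt u)
        ≤ enorm2 (fun u => (∑ v, (A u v * b u v - A v u * b v u)) - gt u))
    {y : γ → ℝ}
    (hy : y = fun u => -((∑ v, (A u v * a u v - A v u * a v u)) - gt u)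
        / enorm2 (fun u' => (∑ v, (A u' v * a u' v - A v u' * a v u')) - gt u'))
    (hne : (fun u => (∑ v, (A u v * a u v - A v u * a v u)) - gt u) ≠ 0) :
    (∑ u, ∑ v, A u v * max (y u - y v) 0) - ∑ u, y u * gt u
      ≤ -(enorm2 (fun u => (∑ v, (A u v * a u v - A v u * a v u)) - gt u)) := by
  set w : γ → ℝ := fun u => (∑ v, (A u v * a u v - A v u * a v u)) - gt u with hw
  set N : ℝ := enorm2 w with hNdef
  have hN : 0 < N := enorm2_pos hne
  have hNsq : N ^ 2 = ∑ u, w u ^ 2 := sq_enorm2 w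
  have hy' : ∀ u, y u = -(w u) / N := fun u => by rw [hy]
  obtain ⟨ay, hayD, hayEq⟩ := pairing_exists A y
  have hvar := varineq A gt ha hmin hayD
  set z : γ → ℝ := fun u => (∑ v, (A u v * ay u v - A v u * ay v u)) - gt u with hz
  have hsplit : ∑ u, y u * z u
      = ∑ u, y u * (∑ v, (A u v * ay u v - A v u * ay v u)) - ∑ u, y u * gt u := by
    rw [← Finset.sum_sub_distrib]
    exact Finset.sum_congr rfl fun u _ => by simp only [hz]; ring
  have hyz : ∑ u, y u * z u = -(∑ u, w u * z u) / N := by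
    have h1 : ∑ u, y u * z u = (∑ u, -(w u * z u)) / N := by
      rw [Finset.sum_div]
      exact Finset.sum_congr rfl fun u _ => by rw [hy' u]; ring
    rw [h1, Finset.sum_neg_distrib, neg_div]
  have hfinal : -(∑ u, w u * z u) / N ≤ -N := by
    rw [div_le_iff₀ hN]
    nlinarith [hvar]
  calc (∑ u, ∑ v, A u v * max (y u - y v) 0) - ∑ u, y u * gt u
      = ∑ u, y u * z u := by rw [hsplit, hayEq]
    _ = -(∑ u, w u * z u) / N := hyz
    _ ≤ -N := hfinal

end Stmt17Aux

set_option maxHeartbeats 1600000 in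
theorem stmt_17 {γ : Type*} [Fintype γ] (A : γ → γ → ℝ) (hA : ∀ u v, 0 ≤ A u v)
    (gt : γ → ℝ) :
    let D : (γ → γ → ℝ) → Prop := fun a =>
      ∀ u v, a u v ∈ Set.Icc (0 : ℝ) 1 ∧ a u v + a v u = 1
    let fA : (γ → γ → ℝ) → γ → ℝ := fun a u => ∑ v, (A u v * a u v - A v u * a v u)
    let obj : (γ → ℝ) → ℝ := fun y =>
      (∑ u, ∑ v, A u v * max (y u - y v) 0) - ∑ u, y u * gt u
    (⨅ y : {y : γ → ℝ // enorm2 y ≤ 1}, obj y.1)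
      = - (⨅ a : {a : γ → γ → ℝ // D a}, enorm2 (fun u => fA a.1 u - gt u)) ∧
    ∀ a : γ → γ → ℝ, D a →
      (∀ b, D b → enorm2 (fun u => fA a u - gt u) ≤ enorm2 (fun u => fA b u - gt u)) →
      (fun u => fA a u - gt u) ≠ 0 →
      (enorm2 (fun u => -(fA a u - gt u) / enorm2 (fun u' => fA a u' - gt u')) ≤ 1 ∧
        ∀ y : γ → ℝ, enorm2 y ≤ 1 →
          obj (fun u => -(fA a u - gt u) / enorm2 (fun u' => fA a u' - gt u')) ≤ obj y) := by
  intro D fA obj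
  constructor
  · obtain ⟨astar, hastar, hminstar⟩ := Stmt17Aux.exists_min A gt
    haveI : Nonempty {a : γ → γ → ℝ // D a} := ⟨⟨astar, hastar⟩⟩
    haveI : Nonempty {y : γ → ℝ // enorm2 y ≤ 1} := ⟨⟨0, by simp [enorm2]⟩⟩
    set w : γ → ℝ := fun u => (∑ v, (A u v * astar u v - A v u * astar v u)) - gt u with hw
    have hlow : ∀ y : γ → ℝ, enorm2 y ≤ 1 → -(enorm2 w) ≤ obj y := fun y hy =>
      Stmt17Aux.lower_bound A hA gt hy hastar
    have hIa : (⨅ a : {a : γ → γ → ℝ // D a}, enorm2 (fun u => fA a.1 u - gt u))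
        = enorm2 w := by
      have hbdd2 : BddBelow (Set.range (fun a : {a : γ → γ → ℝ // D a} =>
          enorm2 (fun u => fA a.1 u - gt u))) :=
        ⟨0, by rintro x ⟨c, rfl⟩; exact Stmt17Aux.enorm2_nonneg _⟩
      apply le_antisymm
      · exact ciInf_le hbdd2 ⟨astar, hastar⟩
      · exact le_ciInf fun c => hminstar c.1 c.2
    rw [hIa]
    have hbdd : BddBelow (Set.range fun y : {y : γ → ℝ // enorm2 y ≤ 1} => obj y.1) :=
      ⟨-(enorm2 w), by rintro x ⟨⟨y, hy⟩, rfl⟩; exact hlow y hy⟩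
    apply le_antisymm
    · by_cases hne : w = 0
      · have h0 : enorm2 (0 : γ → ℝ) ≤ 1 := by
          simp [enorm2]
        have hle := ciInf_le hbdd ⟨(0 : γ → ℝ), h0⟩
        have hobj0 : obj (0 : γ → ℝ) = 0 := by
          show (∑ u, ∑ v, A u v * max ((0:γ → ℝ) u - (0:γ → ℝ) v) 0)
            - ∑ u, (0:γ → ℝ) u * gt u = 0
          simp
        have hwz : enorm2 w = 0 := by
          rw [hne]
          simp [enorm2]
        rw [hwz]
        rw [hobj0] at hle
        simpa using hle
      · set ystar : γ → ℝ := fun u => -(w u) / enorm2 w with hystar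
        have hunit : enorm2 ystar = 1 := Stmt17Aux.enorm2_unit hne
        have hle := ciInf_le hbdd ⟨ystar, le_of_eq hunit⟩
        have hoy : obj ystar ≤ -(enorm2 w) :=
          Stmt17Aux.obj_opt A hA gt hastar hminstar rfl hne
        exact le_trans hle hoy
    · exact le_ciInf fun y => hlow y.1 y.2
  · intro a ha hminA hne
    refine ⟨le_of_eq (Stmt17Aux.enorm2_unit hne), fun y hy => ?_⟩
    exact le_trans (Stmt17Aux.obj_opt A hA gt ha hminA rfl hne)
      (Stmt17Aux.lower_bound A hA gt hy ha)
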